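/- arXiv:2409.09439 — 2 statements merged into one kernel-verified Lean document; each statement's English description precedes it below -/
import Mathlib

section
/- Let z > 0 and let f_z be the solution of the Stein equation for Kolmogorov test functions. Then there exists an absolute constant C > 0 such that for all w with 0 ≤ w ≤ z/2, f_z'(w) ≤ C exp(-z²/4). -/
open MeasureTheory Real Set
set_option maxHeartbeats 1000000

/-- The standard normal cumulative distribution function. -/
noncomputable def stdGaussCDF (z : ℝ) : ℝ :=
  ∫ t in Set.Iic z, Real.exp (-t ^ 2 / 2) / Real.sqrt (2 * Real.pi)

/-- The standard normal density. -/
noncomputable def stdGaussPDF (w : ℝ) : ℝ :=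
  Real.exp (-w ^ 2 / 2) / Real.sqrt (2 * Real.pi)

/-- The solution of the Stein equation for the Kolmogorov test function `1_{· ≤ z}`. -/
noncomputable def steinSol (z w : ℝ) : ℝ :=
  if w ≤ z then stdGaussCDF w * (1 - stdGaussCDF z) / stdGaussPDF w
  else stdGaussCDF z * (1 - stdGaussCDF w) / stdGaussPDF w

/-- The derivative of the Stein solution, defined via the Stein equation
`f_z'(w) = w f_z(w) + 1_{w ≤ z} - Φ(z)`. -/
noncomputable def steinSol' (z w : ℝ) : ℝ :=
  w * steinSol z w + (if w ≤ z then 1 else 0) - stdGaussCDF z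

lemma sqrt2pi_pos : 0 < Real.sqrt (2 * Real.pi) :=
  Real.sqrt_pos.2 (by positivity)

lemma pdf_pos (w : ℝ) : 0 < stdGaussPDF w :=
  div_pos (Real.exp_pos _) sqrt2pi_pos

lemma pdf_integrable : Integrable (fun t : ℝ => Real.exp (-t ^ 2 / 2) / Real.sqrt (2 * Real.pi)) := by
  have h : Integrable (fun t : ℝ => Real.exp (-(1/2) * t ^ 2)) := integrable_exp_neg_mul_sq (by norm_num)
  have := h.div_const (Real.sqrt (2 * Real.pi))
  convert this using 2 with t
  ring_nf

lemma integral_pdf : (∫ t : ℝ, Real.exp (-t ^ 2 / 2) / Real.sqrt (2 * Real.pi)) = 1 := by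
  have h : (∫ t : ℝ, Real.exp (-(1/2) * t ^ 2)) = Real.sqrt (Real.pi / (1/2)) :=
    integral_gaussian (1/2)
  have h2 : (∫ t : ℝ, Real.exp (-t ^ 2 / 2)) = Real.sqrt (2 * Real.pi) := by
    rw [show (2 * Real.pi) = Real.pi / (1/2) by ring, ← h]
    congr 1 with t; ring_nf
  rw [integral_div, h2, div_self sqrt2pi_pos.ne']

lemma cdf_nonneg (z : ℝ) : 0 ≤ stdGaussCDF z :=
  setIntegral_nonneg measurableSet_Iic (fun t _ => (pdf_pos t).le)

lemma tail_eq (z : ℝ) : 1 - stdGaussCDF z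
    = ∫ t in Set.Ioi z, Real.exp (-t ^ 2 / 2) / Real.sqrt (2 * Real.pi) := by
  have h := intervalIntegral.integral_Iic_add_Ioi (b := z) (μ := volume)
    pdf_integrable.integrableOn pdf_integrable.integrableOn
  rw [integral_pdf] at h
  unfold stdGaussCDF; linarith

lemma cdf_le_one (z : ℝ) : stdGaussCDF z ≤ 1 := by
  have h : 0 ≤ ∫ t in Set.Ioi z, Real.exp (-t ^ 2 / 2) / Real.sqrt (2 * Real.pi) :=
    setIntegral_nonneg measurableSet_Ioi (fun t _ => (pdf_pos t).le)
  have := tail_eq z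
  linarith

lemma tail_bound {z : ℝ} (hz : 0 < z) :
    1 - stdGaussCDF z ≤ Real.exp (-z ^ 2 / 2) / (Real.sqrt (2 * Real.pi) * z) := by
  rw [tail_eq]
  have hInt : IntegrableOn
      (fun t : ℝ => (Real.exp (z ^ 2 / 2) / Real.sqrt (2 * Real.pi)) * Real.exp (-(z * t)))
      (Set.Ioi z) := by
    simpa [neg_mul, IntegrableOn] using (exp_neg_integrableOn_Ioi z hz).const_mul
      (Real.exp (z ^ 2 / 2) / Real.sqrt (2 * Real.pi))
  have hle : ∀ t ∈ Set.Ioi z,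
      Real.exp (-t ^ 2 / 2) / Real.sqrt (2 * Real.pi)
        ≤ (Real.exp (z ^ 2 / 2) / Real.sqrt (2 * Real.pi)) * Real.exp (-(z * t)) := by
    intro t _
    rw [div_mul_eq_mul_div, ← Real.exp_add, div_le_div_iff_of_pos_right sqrt2pi_pos]
    apply Real.exp_le_exp.2
    nlinarith [sq_nonneg (t - z)]
  calc (∫ t in Set.Ioi z, Real.exp (-t ^ 2 / 2) / Real.sqrt (2 * Real.pi))
      ≤ ∫ t in Set.Ioi z,
          (Real.exp (z ^ 2 / 2) / Real.sqrt (2 * Real.pi)) * Real.exp (-(z * t)) :=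
        setIntegral_mono_on pdf_integrable.integrableOn hInt measurableSet_Ioi hle
    _ = (Real.exp (z ^ 2 / 2) / Real.sqrt (2 * Real.pi)) * ∫ t in Set.Ioi z, Real.exp (-(z * t)) :=
        integral_const_mul _ _
    _ = (Real.exp (z ^ 2 / 2) / Real.sqrt (2 * Real.pi)) * (z⁻¹ * Real.exp (-(z * z))) := by
        rw [show (∫ t in Set.Ioi z, Real.exp (-(z * t)))
            = ∫ t in Set.Ioi z, (fun x => Real.exp (-x)) (z * t) by rfl,
          integral_comp_mul_left_Ioi (fun x => Real.exp (-x)) z hz,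
          integral_exp_neg_Ioi, smul_eq_mul]
    _ = Real.exp (-z ^ 2 / 2) / (Real.sqrt (2 * Real.pi) * z) := by
        rw [eq_div_iff (by positivity : Real.sqrt (2 * Real.pi) * z ≠ 0)]
        field_simp [Real.exp_ne_zero, ← Real.exp_add]
        ring_nf
        rw [← Real.exp_add]; ring_nf


theorem stmt_6 :
    ∃ C > (0 : ℝ), ∀ z : ℝ, 0 < z → ∀ w : ℝ, 0 ≤ w → w ≤ z / 2 →
      steinSol' z w ≤ C * Real.exp (-z ^ 2 / 4) := by
  refine ⟨3, by norm_num, ?_⟩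
  intro z hz w hw hwz
  have hwle : w ≤ z := le_trans hwz (by linarith)
  have hφw := pdf_pos w
  have hT0 : 0 ≤ 1 - stdGaussCDF z := by linarith [cdf_le_one z]
  have htb := tail_bound hz
  have hsp := sqrt2pi_pos
  have hsp1 : (1:ℝ) ≤ Real.sqrt (2 * Real.pi) := by
    nlinarith [Real.sq_sqrt (show (0:ℝ) ≤ 2 * Real.pi by positivity),
      Real.sqrt_nonneg (2 * Real.pi), Real.pi_gt_three]
  have hA : 1 - stdGaussCDF z ≤ 2 * Real.exp (-z ^ 2 / 4) := by
    rcases le_or_gt z 1 with h1 | h1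
    · have he : Real.exp (-(1/4) : ℝ) ≤ Real.exp (-z ^ 2 / 4) :=
        Real.exp_le_exp.2 (by nlinarith)
      have he2 : (3/4 : ℝ) ≤ Real.exp (-(1/4) : ℝ) := by
        have := Real.add_one_le_exp (-(1/4) : ℝ); linarith
      have := cdf_nonneg z
      nlinarith
    · have h2 : Real.exp (-z ^ 2 / 2) / (Real.sqrt (2 * Real.pi) * z) ≤ Real.exp (-z ^ 2 / 2) := by
        rw [div_le_iff₀ (by positivity)]
        nlinarith [Real.exp_pos (-z ^ 2 / 2),
          mul_le_mul hsp1 h1.le zero_le_one hsp.le]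
      have h3 : Real.exp (-z ^ 2 / 2) ≤ Real.exp (-z ^ 2 / 4) :=
        Real.exp_le_exp.2 (by nlinarith)
      nlinarith [Real.exp_pos (-z ^ 2 / 4)]
  have hB : w * (stdGaussCDF w * (1 - stdGaussCDF z) / stdGaussPDF w)
      ≤ 1 / 2 * Real.exp (-z ^ 2 / 4) := by
    have hstep : w * (stdGaussCDF w * (1 - stdGaussCDF z))
        ≤ Real.exp (-z ^ 2 / 2) / (2 * Real.sqrt (2 * Real.pi)) := by
      have e1 : w * (stdGaussCDF w * (1 - stdGaussCDF z)) ≤ z / 2 * (1 - stdGaussCDF z) := by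
        nlinarith [mul_le_mul_of_nonneg_right (cdf_le_one w) hT0,
          mul_nonneg (cdf_nonneg w) hT0,
          mul_nonneg (show 0 ≤ z / 2 - w by linarith) (mul_nonneg (cdf_nonneg w) hT0)]
      have e2 : z / 2 * (1 - stdGaussCDF z)
          ≤ z / 2 * (Real.exp (-z ^ 2 / 2) / (Real.sqrt (2 * Real.pi) * z)) :=
        mul_le_mul_of_nonneg_left htb (by linarith)
      have e3 : z / 2 * (Real.exp (-z ^ 2 / 2) / (Real.sqrt (2 * Real.pi) * z))
          = Real.exp (-z ^ 2 / 2) / (2 * Real.sqrt (2 * Real.pi)) := by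
        field_simp
      linarith
    rw [← mul_div_assoc, div_le_iff₀ hφw]
    have hexp : Real.exp (-z ^ 2 / 2) ≤ Real.exp (-z ^ 2 / 4) * Real.exp (-w ^ 2 / 2) := by
      rw [← Real.exp_add]
      apply Real.exp_le_exp.2
      nlinarith [mul_nonneg hw (show 0 ≤ z - 2 * w by linarith)]
    calc w * (stdGaussCDF w * (1 - stdGaussCDF z))
        ≤ Real.exp (-z ^ 2 / 2) / (2 * Real.sqrt (2 * Real.pi)) := hstep
      _ ≤ 1 / 2 * Real.exp (-z ^ 2 / 4) * stdGaussPDF w := by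
          unfold stdGaussPDF
          rw [show (1:ℝ) / 2 * Real.exp (-z ^ 2 / 4)
              * (Real.exp (-w ^ 2 / 2) / Real.sqrt (2 * Real.pi))
              = Real.exp (-z ^ 2 / 4) * Real.exp (-w ^ 2 / 2)
                / (2 * Real.sqrt (2 * Real.pi)) by ring]
          gcongr
  rw [steinSol', steinSol, if_pos hwle, if_pos hwle]
  have := Real.exp_pos (-z ^ 2 / 4)
  linarith
end

section
/- Let z > 0, and let F be a real random variable. Then f_z'(F) ≤ C e^{-z²/4} + f_z'(F) 1_{F > z/2} pointwise almost surely, where C is an absolute constant and f_z is the Stein equation solution. -/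
open MeasureTheory Real

namespace SteinAux

lemma sqrt2pi_pos : 0 < Real.sqrt (2 * Real.pi) :=
  Real.sqrt_pos.2 (by positivity)

lemma pdf_pos (w : ℝ) : 0 < stdGaussPDF w := by
  unfold stdGaussPDF
  exact div_pos (Real.exp_pos _) sqrt2pi_pos

lemma pdf_eq (w : ℝ) : stdGaussPDF w = Real.exp (-w ^ 2 / 2) / Real.sqrt (2 * Real.pi) := rfl

lemma exp_form (t : ℝ) : Real.exp (-t ^ 2 / 2) = Real.exp (-(1/2 : ℝ) * t ^ 2) := by
  ring_nf

lemma integrable_g : Integrable (fun t : ℝ => Real.exp (-t ^ 2 / 2) / Real.sqrt (2 * Real.pi)) := by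
  have h : Integrable (fun t : ℝ => Real.exp (-(1/2 : ℝ) * t ^ 2)) :=
    integrable_exp_neg_mul_sq (by norm_num)
  have := h.div_const (Real.sqrt (2 * Real.pi))
  refine this.congr ?_
  filter_upwards with t
  rw [exp_form]

lemma integral_g : ∫ t : ℝ, Real.exp (-t ^ 2 / 2) / Real.sqrt (2 * Real.pi) = 1 := by
  have h : ∫ t : ℝ, Real.exp (-(1/2 : ℝ) * t ^ 2) = Real.sqrt (Real.pi / (1/2)) :=
    integral_gaussian (1/2 : ℝ)
  have h2 : ∫ t : ℝ, Real.exp (-t ^ 2 / 2) = Real.sqrt (2 * Real.pi) := by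
    rw [show (fun t : ℝ => Real.exp (-t ^ 2 / 2)) = fun t : ℝ => Real.exp (-(1/2 : ℝ) * t ^ 2) by
      funext t; rw [exp_form], h]
    norm_num [mul_comm]
  rw [integral_div, h2, div_self (ne_of_gt sqrt2pi_pos)]

lemma cdf_nonneg (w : ℝ) : 0 ≤ stdGaussCDF w := by
  unfold stdGaussCDF
  refine setIntegral_nonneg measurableSet_Iic fun t _ => ?_
  positivity

lemma cdf_le_one (w : ℝ) : stdGaussCDF w ≤ 1 := by
  unfold stdGaussCDF
  rw [← integral_g]
  exact setIntegral_le_integral integrable_g (by filter_upwards with t using by positivity)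

lemma tail_eq (z : ℝ) :
    1 - stdGaussCDF z = ∫ t in Set.Ioi z, Real.exp (-t ^ 2 / 2) / Real.sqrt (2 * Real.pi) := by
  have h := intervalIntegral.integral_Iic_add_Ioi (b := z)
    (integrable_g.integrableOn) (integrable_g.integrableOn)
  rw [integral_g] at h
  unfold stdGaussCDF
  linarith

lemma integrableOn_mul_exp (z : ℝ) :
    IntegrableOn (fun t : ℝ => t * Real.exp (-t ^ 2 / 2)) (Set.Ioi z) := by
  have h : Integrable (fun t : ℝ => t * Real.exp (-(1/2 : ℝ) * t ^ 2)) :=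
    integrable_mul_exp_neg_mul_sq (by norm_num)
  refine (h.integrableOn).congr_fun (fun t _ => ?_) measurableSet_Ioi
  rw [exp_form]

lemma integral_mul_exp (z : ℝ) :
    ∫ t in Set.Ioi z, t * Real.exp (-t ^ 2 / 2) = Real.exp (-z ^ 2 / 2) := by
  have hderiv : ∀ t ∈ Set.Ioi z,
      HasDerivAt (fun t : ℝ => -Real.exp (-t ^ 2 / 2)) (t * Real.exp (-t ^ 2 / 2)) t := by
    intro t _
    have h1 : HasDerivAt (fun t : ℝ => -t ^ 2 / 2) (-t) t := by
      have h := ((hasDerivAt_pow 2 t).neg).div_const 2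
      refine h.congr_deriv ?_
      push_cast
      ring
    have h2 := (h1.exp).neg
    refine h2.congr_deriv ?_
    ring
  have htend : Filter.Tendsto (fun t : ℝ => -Real.exp (-t ^ 2 / 2)) Filter.atTop (nhds 0) := by
    have h1 : Filter.Tendsto (fun t : ℝ => -t ^ 2 / 2) Filter.atTop Filter.atBot := by
      have h2 : Filter.Tendsto (fun t : ℝ => t ^ 2 / 2) Filter.atTop Filter.atTop :=
        (Filter.tendsto_pow_atTop two_ne_zero).atTop_div_const (by norm_num)
      have h3 := Filter.tendsto_neg_atTop_atBot.comp h2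
      refine h3.congr fun t => ?_
      simp [neg_div]
    have := (Real.tendsto_exp_atBot.comp h1).neg
    simpa using this
  have hcont : ContinuousWithinAt (fun t : ℝ => -Real.exp (-t ^ 2 / 2)) (Set.Ici z) z :=
    Continuous.continuousWithinAt (by fun_prop)
  have h := integral_Ioi_of_hasDerivAt_of_tendsto hcont hderiv (integrableOn_mul_exp z) htend
  rw [h]; ring

lemma tail_le (z : ℝ) (hz : 0 < z) :
    1 - stdGaussCDF z ≤ Real.exp (-z ^ 2 / 2) / (z * Real.sqrt (2 * Real.pi)) := by
  rw [tail_eq]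
  have hmono : ∫ t in Set.Ioi z, Real.exp (-t ^ 2 / 2) / Real.sqrt (2 * Real.pi) ≤
      ∫ t in Set.Ioi z, (t / z) * (Real.exp (-t ^ 2 / 2) / Real.sqrt (2 * Real.pi)) := by
    refine setIntegral_mono_on integrable_g.integrableOn ?_ measurableSet_Ioi ?_
    · have h : IntegrableOn
          (fun t : ℝ => t * Real.exp (-t ^ 2 / 2) / z / Real.sqrt (2 * Real.pi))
          (Set.Ioi z) :=
        ((integrableOn_mul_exp z).div_const z).div_const (Real.sqrt (2 * Real.pi))
      refine IntegrableOn.congr_fun h (fun t _ => ?_) measurableSet_Ioi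
      ring
    · intro t ht
      have h1 : (1 : ℝ) ≤ t / z := (one_le_div hz).2 (le_of_lt ht)
      exact le_mul_of_one_le_left (by positivity) h1
  have heq : ∫ t in Set.Ioi z, (t / z) * (Real.exp (-t ^ 2 / 2) / Real.sqrt (2 * Real.pi)) =
      (∫ t in Set.Ioi z, t * Real.exp (-t ^ 2 / 2)) / (z * Real.sqrt (2 * Real.pi)) := by
    rw [← integral_div]
    congr 1; funext t; ring
  calc _ ≤ _ := hmono
    _ = _ := by rw [heq, integral_mul_exp]

lemma tail_le' (z : ℝ) (hz : 0 < z) :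
    1 - stdGaussCDF z ≤ (3/2) * Real.exp (-z ^ 2 / 4) := by
  rcases le_or_gt z 1 with h | h
  · have h1 : 1 - stdGaussCDF z ≤ 1 := by linarith [cdf_nonneg z]
    have h2 : Real.exp (-(1/4 : ℝ)) ≤ Real.exp (-z ^ 2 / 4) := by
      apply Real.exp_le_exp.2; nlinarith
    have h4 : Real.exp ((1:ℝ)/4) ≤ 3/2 := by
      have h6 : Real.exp ((1:ℝ)/4) ^ 4 = Real.exp 1 := by
        rw [← Real.exp_nat_mul]; norm_num
      refine le_of_pow_le_pow_left₀ (n := 4) (by norm_num) (by norm_num) ?_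
      rw [h6]
      nlinarith [Real.exp_one_lt_d9]
    have h3 : (1 : ℝ) ≤ (3/2) * Real.exp (-(1/4 : ℝ)) := by
      rw [Real.exp_neg]
      have hpos := Real.exp_pos ((1:ℝ)/4)
      have hinv : 0 ≤ (Real.exp ((1:ℝ)/4))⁻¹ := by positivity
      have hc : (Real.exp ((1:ℝ)/4))⁻¹ * Real.exp ((1:ℝ)/4) = 1 :=
        inv_mul_cancel₀ (ne_of_gt hpos)
      nlinarith
    linarith
  · have h1 := tail_le z hz
    have h2 : Real.exp (-z ^ 2 / 2) / (z * Real.sqrt (2 * Real.pi)) ≤ Real.exp (-z ^ 2 / 2) := by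
      rw [div_le_iff₀ (by positivity)]
      have hpi : (1:ℝ) ≤ Real.sqrt (2 * Real.pi) := by
        rw [show (1:ℝ) = Real.sqrt 1 by simp]
        exact Real.sqrt_le_sqrt (by nlinarith [Real.pi_gt_three])
      have hz1 : (1:ℝ) ≤ z * Real.sqrt (2 * Real.pi) := by nlinarith
      exact le_mul_of_one_le_right (Real.exp_pos _).le hz1
    have h3 : Real.exp (-z ^ 2 / 2) ≤ Real.exp (-z ^ 2 / 4) := by
      apply Real.exp_le_exp.2; nlinarith
    nlinarith [Real.exp_pos (-z ^ 2 / 4)]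

lemma key (z w : ℝ) (hz : 0 < z) (hw : w ≤ z / 2) :
    steinSol' z w ≤ 2 * Real.exp (-z ^ 2 / 4) := by
  have hwz : w ≤ z := by linarith
  have hpdf := pdf_pos w
  have hT0 : 0 ≤ 1 - stdGaussCDF z := by linarith [cdf_le_one z]
  have hcdf0 := cdf_nonneg w
  have hcdf1 := cdf_le_one w
  have hsol : steinSol' z w =
      w * (stdGaussCDF w * (1 - stdGaussCDF z) / stdGaussPDF w) + 1 - stdGaussCDF z := by
    unfold steinSol' steinSol
    rw [if_pos hwz, if_pos hwz]
  rw [hsol]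
  have htail := tail_le' z hz
  rcases le_or_gt w 0 with hw0 | hw0
  · have hterm : w * (stdGaussCDF w * (1 - stdGaussCDF z) / stdGaussPDF w) ≤ 0 :=
      mul_nonpos_of_nonpos_of_nonneg hw0 (by positivity)
    nlinarith [Real.exp_pos (-z ^ 2 / 4)]
  · have hsqrt := sqrt2pi_pos
    have hPinv : (stdGaussPDF w)⁻¹ = Real.sqrt (2 * Real.pi) * Real.exp (w ^ 2 / 2) := by
      rw [pdf_eq, inv_div, div_eq_mul_inv, ← Real.exp_neg]
      congr 1
      ring
    have hterm : w * (stdGaussCDF w * (1 - stdGaussCDF z) / stdGaussPDF w) ≤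
        (1/2) * Real.exp (-z ^ 2 / 4) := by
      have e1 : w * (stdGaussCDF w * (1 - stdGaussCDF z) / stdGaussPDF w)
          = w * stdGaussCDF w * (1 - stdGaussCDF z)
            * (Real.sqrt (2 * Real.pi) * Real.exp (w ^ 2 / 2)) := by
        rw [div_eq_mul_inv, hPinv]; ring
      have e2 : w * stdGaussCDF w * (1 - stdGaussCDF z)
            * (Real.sqrt (2 * Real.pi) * Real.exp (w ^ 2 / 2))
          ≤ w * 1 * (Real.exp (-z ^ 2 / 2) / (z * Real.sqrt (2 * Real.pi)))
            * (Real.sqrt (2 * Real.pi) * Real.exp (w ^ 2 / 2)) := by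
        have ht := tail_le z hz
        gcongr <;>
          first
            | exact hcdf1
            | exact ht
            | exact mul_nonneg hw0.le hcdf0
            | exact hw0.le
            | positivity
      have e3 : w * 1 * (Real.exp (-z ^ 2 / 2) / (z * Real.sqrt (2 * Real.pi)))
            * (Real.sqrt (2 * Real.pi) * Real.exp (w ^ 2 / 2))
          = (w / z) * Real.exp (w ^ 2 / 2 - z ^ 2 / 2) := by
        have hE : Real.exp (w ^ 2 / 2 - z ^ 2 / 2)
            = Real.exp (w ^ 2 / 2) * Real.exp (-z ^ 2 / 2) := by
          rw [← Real.exp_add]; ring_nf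
        rw [hE]
        field_simp
      have e4 : (w / z) * Real.exp (w ^ 2 / 2 - z ^ 2 / 2) ≤ (1/2) * Real.exp (-z ^ 2 / 4) := by
        have h5 : w / z ≤ 1/2 := by rw [div_le_iff₀ hz]; linarith
        have h6 : Real.exp (w ^ 2 / 2 - z ^ 2 / 2) ≤ Real.exp (-z ^ 2 / 4) := by
          apply Real.exp_le_exp.2; nlinarith
        exact mul_le_mul h5 h6 (Real.exp_pos _).le (by norm_num)
      calc w * (stdGaussCDF w * (1 - stdGaussCDF z) / stdGaussPDF w)
          = _ := e1
        _ ≤ _ := e2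
        _ = _ := e3
        _ ≤ _ := e4
    linarith
end SteinAux

theorem stmt_7 :
    ∃ C > (0 : ℝ), ∀ {Ω : Type} [MeasureSpace Ω] (F : Ω → ℝ) (z : ℝ), 0 < z →
      ∀ᵐ ω : Ω, steinSol' z (F ω) ≤
        C * Real.exp (-z ^ 2 / 4) +
          steinSol' z (F ω) * (if z / 2 < F ω then 1 else 0) := by
  refine ⟨2, by norm_num, ?_⟩
  intro Ω _ F z hz
  filter_upwards with ω
  by_cases h : z / 2 < F ω
  · rw [if_pos h, mul_one]
    have : 0 < 2 * Real.exp (-z ^ 2 / 4) := by positivity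
    linarith
  · rw [if_neg h, mul_zero, add_zero]
    exact SteinAux.key z (F ω) hz (not_lt.1 h)
end
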